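/- There exists a bilaterally-complete tripartite graph G = (A,B,C;E) in which no minimum 𝒯-transversal is contained in the union of two sides; in fact, every minimum 𝒯-transversal of G contains an edge in each of the three sides of G, and the number of edges in the smallest side of G is strictly greater than τ△(G). (An example is the graph with G[A∪B] ≅ G[A∪C] ≅ K_{2,4}, A = {0,1}, B = {2,3,4,5}, C = {6,7,8,9}, and E_BC = {26, 27, 28, 38, 39, 49, 59}, which has τ△(G) = 5 while its smallest side has 7 edges.) -/

import Mathlib

set_option maxRecDepth 10000
set_option maxHeartbeats 1000000
set_option synthInstance.maxSize 2000
set_option synthInstance.maxHeartbeats 1000000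


open SimpleGraph

variable {V : Type*}

/-- The set of edges of a triangle, given by its vertex set `t`:
all unordered pairs of distinct vertices of `t`. -/
def triangleEdges (t : Finset V) : Set (Sym2 V) :=
  {e | ∃ u ∈ t, ∃ v ∈ t, u ≠ v ∧ e = s(u, v)}

/-- `E'` is a `𝒯`-transversal of `G`: a set of edges of `G` meeting every triangle of `G`. -/
def IsTriTransversal (G : SimpleGraph V) (E' : Set (Sym2 V)) : Prop :=
  E' ⊆ G.edgeSet ∧ ∀ t : Finset V, G.IsNClique 3 t → ∃ e ∈ triangleEdges t, e ∈ E'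

/-- `τ△ G`: the minimum cardinality of a `𝒯`-transversal of `G`. -/
noncomputable def triTransversalNum (G : SimpleGraph V) : ℕ :=
  sInf {n | ∃ E' : Set (Sym2 V), IsTriTransversal G E' ∧ E'.ncard = n}

/-- `P` is a packing in `G`: a set of triangles of `G` that are pairwise edge-disjoint. -/
def IsTriPacking (G : SimpleGraph V) (P : Set (Finset V)) : Prop :=
  (∀ t ∈ P, G.IsNClique 3 t) ∧
    P.Pairwise fun t t' => Disjoint (triangleEdges t) (triangleEdges t')

/-- `ν△ G`: the maximum cardinality of a packing of triangles in `G`. -/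
noncomputable def triPackingNum (G : SimpleGraph V) : ℕ :=
  sSup {n | ∃ P : Set (Finset V), IsTriPacking G P ∧ P.ncard = n}

/-- The set of edges of `G` with one endpoint in `M` and the other in `W`. -/
def edgesBetween (G : SimpleGraph V) (M W : Set V) : Set (Sym2 V) :=
  {e | e ∈ G.edgeSet ∧ ∃ u ∈ M, ∃ w ∈ W, e = s(u, w)}

/-- `G` is tripartite with parts `A`, `B`, `C`: the vertex set is partitioned into
the three independent sets `A`, `B`, `C`. -/
def IsTripartition (G : SimpleGraph V) (A B C : Set V) : Prop :=
  A ∪ B ∪ C = Set.univ ∧ Disjoint A B ∧ Disjoint A C ∧ Disjoint B C ∧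
    (∀ u ∈ A, ∀ v ∈ A, ¬G.Adj u v) ∧ (∀ u ∈ B, ∀ v ∈ B, ¬G.Adj u v) ∧
    (∀ u ∈ C, ∀ v ∈ C, ¬G.Adj u v)

/-- The side `G[X ∪ Y]` of a tripartite graph is a complete bipartite graph. -/
def CompleteSide (G : SimpleGraph V) (X Y : Set V) : Prop :=
  ∀ x ∈ X, ∀ y ∈ Y, G.Adj x y

/-- `W` is a vertex cover of the subgraph edge-induced by the edge set `Y`. -/
def CoversEdges (W : Set V) (Y : Set (Sym2 V)) : Prop :=
  ∀ e ∈ Y, ∃ v ∈ W, v ∈ e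

/-- `M` is a matching consisting of edges from the edge set `F`:
the edges of `M` are pairwise vertex-disjoint. -/
def IsMatchingIn (F : Set (Sym2 V)) (M : Set (Sym2 V)) : Prop :=
  M ⊆ F ∧ M.Pairwise fun e f => ∀ v, v ∈ e → v ∉ f

section Example

/-- BC-edge list of the example graph. -/
def bcList : List (Fin 10 × Fin 10) := [(2,6),(2,7),(2,8),(3,8),(3,9),(4,9),(5,9)]

def adjF (u v : Fin 10) : Bool :=
  (u.val < 2 && 2 ≤ v.val) || (v.val < 2 && 2 ≤ u.val) ||
    ((u, v) ∈ bcList) || ((v, u) ∈ bcList)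

def G10 : SimpleGraph (Fin 10) where
  Adj u v := adjF u v
  symm := ⟨fun u v h => (by decide : ∀ u v : Fin 10, adjF u v = true → adjF v u = true) u v h⟩
  loopless := ⟨fun v h => (by decide : ∀ v : Fin 10, ¬ adjF v v = true) v h⟩

instance : DecidableRel G10.Adj := fun u v => inferInstanceAs (Decidable (adjF u v = true))

def A10 : Set (Fin 10) := {v | v.val < 2}
def B10 : Set (Fin 10) := {v | 2 ≤ v.val ∧ v.val < 6}
def C10 : Set (Fin 10) := {v | 6 ≤ v.val}

instance : DecidablePred (· ∈ A10) := fun v => inferInstanceAs (Decidable (v.val < 2))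
instance : DecidablePred (· ∈ B10) := fun v => inferInstanceAs (Decidable (2 ≤ v.val ∧ v.val < 6))
instance : DecidablePred (· ∈ C10) := fun v => inferInstanceAs (Decidable (6 ≤ v.val))

instance (t : Finset (Fin 10)) : DecidablePred (· ∈ triangleEdges t) := fun e =>
  inferInstanceAs (Decidable (∃ u ∈ t, ∃ v ∈ t, u ≠ v ∧ e = s(u, v)))

instance (M W : Set (Fin 10)) [DecidablePred (· ∈ M)] [DecidablePred (· ∈ W)] :
    DecidablePred (· ∈ edgesBetween G10 M W) := fun e =>
  inferInstanceAs (Decidable (e ∈ G10.edgeSet ∧ ∃ u ∈ M, ∃ w ∈ W, e = s(u, w)))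

/-- The 5-edge transversal. -/
def E0 : Finset (Sym2 (Fin 10)) := {s(0,2), s(1,2), s(0,9), s(1,9), s(3,8)}

lemma hits_of_triples (E : Finset (Sym2 (Fin 10)))
    (h : ∀ a b c : Fin 10, G10.Adj a b → G10.Adj a c → G10.Adj b c →
      s(a,b) ∈ E ∨ s(a,c) ∈ E ∨ s(b,c) ∈ E) :
    ∀ t : Finset (Fin 10), G10.IsNClique 3 t → ∃ e ∈ triangleEdges t, e ∈ E := by
  intro t ht
  obtain ⟨a, b, c, hab, hac, hbc, rfl⟩ := SimpleGraph.is3Clique_iff.mp ht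
  have ha : a ∈ ({a, b, c} : Finset (Fin 10)) := by simp
  have hb : b ∈ ({a, b, c} : Finset (Fin 10)) := by simp
  have hc : c ∈ ({a, b, c} : Finset (Fin 10)) := by simp
  rcases h a b c hab hac hbc with h1 | h1 | h1
  · exact ⟨s(a,b), ⟨a, ha, b, hb, hab.ne, rfl⟩, h1⟩
  · exact ⟨s(a,c), ⟨a, ha, c, hc, hac.ne, rfl⟩, h1⟩
  · exact ⟨s(b,c), ⟨b, hb, c, hc, hbc.ne, rfl⟩, h1⟩

lemma E0_hits : ∀ t : Finset (Fin 10), G10.IsNClique 3 t → ∃ e ∈ triangleEdges t, e ∈ E0 :=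
  hits_of_triples E0 (by decide)

lemma E0_trans : IsTriTransversal G10 ↑E0 := by
  constructor
  · intro e he
    rw [Finset.mem_coe] at he
    exact (by decide : ∀ e ∈ E0, e ∈ G10.edgeSet) e he
  · intro t ht
    obtain ⟨e, h1, h2⟩ := E0_hits t ht
    exact ⟨e, h1, Finset.mem_coe.mpr h2⟩

/-- Generic lower bound: a family of triangles whose pairwise common edges avoid `E'`
forces `E'` to be large. -/
lemma card_le_ncard_of_triangles (E' : Set (Sym2 (Fin 10)))
    (h2 : ∀ t : Finset (Fin 10), G10.IsNClique 3 t → ∃ e ∈ triangleEdges t, e ∈ E')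
    (T : Finset (Finset (Fin 10))) (hT : ∀ t ∈ T, G10.IsNClique 3 t)
    (hdisj : ∀ t ∈ T, ∀ t' ∈ T, t ≠ t' →
      ∀ e ∈ E', e ∈ triangleEdges t → e ∉ triangleEdges t') :
    T.card ≤ E'.ncard := by
  classical
  have hfin : E'.Finite := Set.toFinite E'
  choose f hf1 hf2 using fun (t : {x // x ∈ T}) => h2 t.1 (hT t.1 t.2)
  rw [Set.ncard_eq_toFinset_card E' hfin, ← Finset.card_attach (s := T)]
  apply Finset.card_le_card_of_injOn f
  · intro t _
    exact hfin.mem_toFinset.mpr (hf2 t)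
  · intro t _ t' _ hft
    by_contra hne
    have hne' : (t : Finset (Fin 10)) ≠ (t' : Finset (Fin 10)) := fun h => hne (Subtype.ext h)
    have h1 : f t ∈ triangleEdges (t' : Finset (Fin 10)) := by rw [hft]; exact hf1 t'
    exact hdisj t.1 t.2 t'.1 t'.2 hne' (f t) (hf2 t) (hf1 t) h1

def T5 : Finset (Finset (Fin 10)) := {{0,2,6},{0,3,8},{0,4,9},{1,2,7},{1,5,9}}

instance myNCliqueDec (n : ℕ) (t : Finset (Fin 10)) : Decidable (G10.IsNClique n t) :=
  decidable_of_iff ((∀ u ∈ t, ∀ v ∈ t, u ≠ v → G10.Adj u v) ∧ t.card = n) (by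
    rw [SimpleGraph.isNClique_iff, SimpleGraph.isClique_iff]
    unfold Set.Pairwise
    simp [Finset.mem_coe])

lemma T5_tri : ∀ t ∈ T5, G10.IsNClique 3 t := by
  intro t ht; fin_cases ht <;> decide

lemma T5_disj : ∀ t ∈ T5, ∀ t' ∈ T5, t ≠ t' →
    ∀ e, e ∈ triangleEdges t → e ∉ triangleEdges t' := by
  intro t ht t' ht' hne
  fin_cases ht <;> fin_cases ht' <;> first | exact absurd rfl hne | decide

lemma tau5 : triTransversalNum G10 = 5 := by
  apply le_antisymm
  · have hmem : (5:ℕ) ∈ {n | ∃ E' : Set (Sym2 (Fin 10)),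
        IsTriTransversal G10 E' ∧ E'.ncard = n} :=
      ⟨↑E0, E0_trans, by rw [Set.ncard_coe_finset]; decide⟩
    exact Nat.sInf_le hmem
  · have hmem : (5:ℕ) ∈ {n | ∃ E' : Set (Sym2 (Fin 10)),
        IsTriTransversal G10 E' ∧ E'.ncard = n} :=
      ⟨↑E0, E0_trans, by rw [Set.ncard_coe_finset]; decide⟩
    apply le_csInf ⟨5, hmem⟩
    rintro n ⟨E', hE', rfl⟩
    have h := card_le_ncard_of_triangles E' hE'.2 T5 T5_tri
      (fun t ht t' ht' hne e _ het het' => T5_disj t ht t' ht' hne e het het')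
    rwa [show T5.card = 5 from by decide] at h

def TnoAB : Finset (Finset (Fin 10)) := {{0,2,6},{0,2,7},{0,2,8},{1,3,8},{0,3,9},{1,4,9}}
def TnoAC : Finset (Finset (Fin 10)) := {{0,2,6},{1,2,7},{0,3,8},{1,3,9},{0,4,9},{0,5,9}}
def TnoBC : Finset (Finset (Fin 10)) := {{0,2,6},{0,3,8},{0,4,9},{1,2,6},{1,3,8},{1,4,9}}

lemma TnoAB_tri : ∀ t ∈ TnoAB, G10.IsNClique 3 t := by
  intro t ht; fin_cases ht <;> decide

lemma TnoAC_tri : ∀ t ∈ TnoAC, G10.IsNClique 3 t := by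
  intro t ht; fin_cases ht <;> decide

lemma TnoBC_tri : ∀ t ∈ TnoBC, G10.IsNClique 3 t := by
  intro t ht; fin_cases ht <;> decide

lemma TnoAB_sub : ∀ t ∈ TnoAB, ∀ t' ∈ TnoAB, t ≠ t' →
    ∀ e, e ∈ triangleEdges t → e ∈ triangleEdges t' → e ∈ edgesBetween G10 A10 B10 := by
  intro t ht t' ht' hne
  fin_cases ht <;> fin_cases ht' <;> first | exact absurd rfl hne | decide

lemma TnoAC_sub : ∀ t ∈ TnoAC, ∀ t' ∈ TnoAC, t ≠ t' →
    ∀ e, e ∈ triangleEdges t → e ∈ triangleEdges t' → e ∈ edgesBetween G10 A10 C10 := by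
  intro t ht t' ht' hne
  fin_cases ht <;> fin_cases ht' <;> first | exact absurd rfl hne | decide

lemma TnoBC_sub : ∀ t ∈ TnoBC, ∀ t' ∈ TnoBC, t ≠ t' →
    ∀ e, e ∈ triangleEdges t → e ∈ triangleEdges t' → e ∈ edgesBetween G10 B10 C10 := by
  intro t ht t' ht' hne
  fin_cases ht <;> fin_cases ht' <;> first | exact absurd rfl hne | decide

/-- If a transversal misses side `S`, and `T` is a 6-family of triangles whose pairwise
common edges all lie in `S`, then the transversal has at least 6 edges. -/
lemma six_le (E' : Set (Sym2 (Fin 10))) (hE' : IsTriTransversal G10 E')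
    (S : Set (Sym2 (Fin 10))) (T : Finset (Finset (Fin 10)))
    (hT : ∀ t ∈ T, G10.IsNClique 3 t) (hcard : T.card = 6)
    (hsub : ∀ t ∈ T, ∀ t' ∈ T, t ≠ t' →
      ∀ e, e ∈ triangleEdges t → e ∈ triangleEdges t' → e ∈ S)
    (hempty : E' ∩ S = ∅) : 6 ≤ E'.ncard := by
  have h := card_le_ncard_of_triangles E' hE'.2 T hT ?_
  · rwa [hcard] at h
  · intro t ht t' ht' hne e heE' het het'
    exact Set.eq_empty_iff_forall_notMem.mp hempty e ⟨heE', hsub t ht t' ht' hne e het het'⟩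

def FAB : Finset (Sym2 (Fin 10)) := {s(0,2),s(0,3),s(0,4),s(0,5),s(1,2),s(1,3),s(1,4),s(1,5)}
def FAC : Finset (Sym2 (Fin 10)) := {s(0,6),s(0,7),s(0,8),s(0,9),s(1,6),s(1,7),s(1,8),s(1,9)}
def FBC : Finset (Sym2 (Fin 10)) := {s(2,6),s(2,7),s(2,8),s(3,8),s(3,9),s(4,9),s(5,9)}

lemma eAB : edgesBetween G10 A10 B10 = ↑FAB := by
  ext e
  rw [Finset.mem_coe]
  exact (by decide : ∀ e : Sym2 (Fin 10), e ∈ edgesBetween G10 A10 B10 ↔ e ∈ FAB) e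

lemma eAC : edgesBetween G10 A10 C10 = ↑FAC := by
  ext e
  rw [Finset.mem_coe]
  exact (by decide : ∀ e : Sym2 (Fin 10), e ∈ edgesBetween G10 A10 C10 ↔ e ∈ FAC) e

lemma eBC : edgesBetween G10 B10 C10 = ↑FBC := by
  ext e
  rw [Finset.mem_coe]
  exact (by decide : ∀ e : Sym2 (Fin 10), e ∈ edgesBetween G10 B10 C10 ↔ e ∈ FBC) e

end Example

/-- There exists a bilaterally-complete tripartite graph `G` in which every minimum
`𝒯`-transversal contains an edge in each of the three sides of `G` (in particular,
no minimum `𝒯`-transversal is contained in the union of two sides), and the number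
of edges of the smallest side of `G` is strictly greater than `τ△(G)`. -/
theorem exists_bilaterallyComplete_all_sides_needed :
    ∃ (V : Type) (_ : Fintype V) (G : SimpleGraph V) (A B C : Set V),
      IsTripartition G A B C ∧
      ((CompleteSide G A B ∧ CompleteSide G A C) ∨
       (CompleteSide G A B ∧ CompleteSide G B C) ∨
       (CompleteSide G A C ∧ CompleteSide G B C)) ∧
      (∀ E' : Set (Sym2 V), IsTriTransversal G E' →
        E'.ncard = triTransversalNum G →
          (E' ∩ edgesBetween G A B).Nonempty ∧
          (E' ∩ edgesBetween G A C).Nonempty ∧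
          (E' ∩ edgesBetween G B C).Nonempty) ∧
      triTransversalNum G <
        min (edgesBetween G A B).ncard
          (min (edgesBetween G A C).ncard (edgesBetween G B C).ncard) := by
  refine ⟨Fin 10, inferInstance, G10, A10, B10, C10, ?_, ?_, ?_, ?_⟩
  · refine ⟨Set.eq_univ_iff_forall.mpr (by decide), Set.disjoint_left.mpr (by decide),
      Set.disjoint_left.mpr (by decide), Set.disjoint_left.mpr (by decide),
      by decide, by decide, by decide⟩
  · exact Or.inl ⟨(by decide : ∀ x ∈ A10, ∀ y ∈ B10, G10.Adj x y),
      (by decide : ∀ x ∈ A10, ∀ y ∈ C10, G10.Adj x y)⟩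
  · intro E' hE' hcard
    rw [tau5] at hcard
    refine ⟨?_, ?_, ?_⟩
    · by_contra h
      rw [Set.not_nonempty_iff_eq_empty] at h
      have h6 := six_le E' hE' (edgesBetween G10 A10 B10) TnoAB TnoAB_tri (by decide)
        TnoAB_sub h
      omega
    · by_contra h
      rw [Set.not_nonempty_iff_eq_empty] at h
      have h6 := six_le E' hE' (edgesBetween G10 A10 C10) TnoAC TnoAC_tri (by decide)
        TnoAC_sub h
      omega
    · by_contra h
      rw [Set.not_nonempty_iff_eq_empty] at h
      have h6 := six_le E' hE' (edgesBetween G10 B10 C10) TnoBC TnoBC_tri (by decide)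
        TnoBC_sub h
      omega
  · rw [tau5, eAB, eAC, eBC, Set.ncard_coe_finset, Set.ncard_coe_finset, Set.ncard_coe_finset]
    decide
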